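/- If f is a positive 0-convex (i.e., log-convex) function on [a,b] with f(a) ≠ f(b) and f integrable, then (1/(b-a)) ∫_a^b f(x) dx ≤ (f(a) − f(b))/(ln f(a) − ln f(b)). -/

import Mathlib

theorem log_convex_gill (f : ℝ → ℝ) (a b : ℝ) (hab : a < b)
    (hpos : ∀ x ∈ Set.Icc a b, 0 < f x)
    (hconv : ∀ x ∈ Set.Icc a b, ∀ y ∈ Set.Icc a b, ∀ l ∈ Set.Icc (0:ℝ) 1,
      f (l * x + (1 - l) * y) ≤ f x ^ l * f y ^ (1 - l))
    (hne : f a ≠ f b)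
    (hint : IntervalIntegrable f MeasureTheory.volume a b) :
    (1 / (b - a)) * ∫ x in a..b, f x ≤
      (f a - f b) / (Real.log (f a) - Real.log (f b)) := by
  have hba : (0:ℝ) < b - a := sub_pos.mpr hab
  have ha : a ∈ Set.Icc a b := Set.left_mem_Icc.mpr hab.le
  have hb : b ∈ Set.Icc a b := Set.right_mem_Icc.mpr hab.le
  have hfa := hpos a ha
  have hfb := hpos b hb
  have hlogne : Real.log (f a) - Real.log (f b) ≠ 0 := by
    intro h
    exact hne (Real.log_injOn_pos (Set.mem_Ioi.mpr hfa) (Set.mem_Ioi.mpr hfb)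
      (by linarith [sub_eq_zero.mp h]))
  set c : ℝ := (Real.log (f a) - Real.log (f b)) / (b - a) with hc
  have hcne : c ≠ 0 := div_ne_zero hlogne hba.ne'
  set g : ℝ → ℝ := fun x => Real.exp (c * (b - x) + Real.log (f b)) with hg
  -- pointwise bound
  have hle : ∀ x ∈ Set.Icc a b, f x ≤ g x := by
    intro x hx
    obtain ⟨hax, hxb⟩ := hx
    set l : ℝ := (b - x) / (b - a) with hl
    have hl0 : 0 ≤ l := div_nonneg (by linarith) hba.le
    have hl1 : l ≤ 1 := by
      rw [hl, div_le_one hba]; linarith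
    have hx' : l * a + (1 - l) * b = x := by
      rw [hl]; field_simp; ring
    have := hconv a ha b hb l ⟨hl0, hl1⟩
    rw [hx'] at this
    refine this.trans_eq ?_
    rw [Real.rpow_def_of_pos hfa, Real.rpow_def_of_pos hfb, ← Real.exp_add]
    congr 1
    have : c * (b - x) = l * (Real.log (f a) - Real.log (f b)) := by
      rw [hc, hl]; field_simp
    rw [this]; ring
  have hgcont : Continuous g := by
    fun_prop
  have hgint : IntervalIntegrable g MeasureTheory.volume a b :=
    hgcont.intervalIntegrable a b
  have hmono : (∫ x in a..b, f x) ≤ ∫ x in a..b, g x :=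
    intervalIntegral.integral_mono_on hab.le hint hgint hle
  -- compute ∫ g
  have hgval : (∫ x in a..b, g x) = (f a - f b) / c := by
    have hfun : ∀ x, g x = Real.exp ((-c) * x + (c * b + Real.log (f b))) := by
      intro x
      show Real.exp (c * (b - x) + Real.log (f b)) = _
      congr 1; ring
    simp only [hfun]
    rw [ intervalIntegral.integral_comp_mul_add Real.exp (neg_ne_zero.mpr hcne),
      integral_exp]
    have e1 : -c * a + (c * b + Real.log (f b)) = c * (b - a) + Real.log (f b) := by ring
    have e2 : -c * b + (c * b + Real.log (f b)) = Real.log (f b) := by ring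
    rw [e1, e2]
    have hcb : c * (b - a) = Real.log (f a) - Real.log (f b) := by
      rw [hc]; field_simp
    rw [Real.exp_log hfb, Real.exp_add, hcb, Real.exp_sub, Real.exp_log hfa,
      Real.exp_log hfb, div_mul_cancel₀ _ hfb.ne', smul_eq_mul, inv_neg,
      div_eq_inv_mul]
    ring
  have : (1 / (b - a)) * ∫ x in a..b, f x ≤ (1 / (b - a)) * ((f a - f b) / c) := by
    rw [← hgval]
    exact mul_le_mul_of_nonneg_left hmono (by positivity)
  refine this.trans_eq ?_
  rw [hc]
  field_simp
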